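/- Fix integers n and k ≥ 2, and define f(s) = s·C(s−1, k−1) + C(n−s, k) for 1 ≤ s ≤ ⌊(n−1)/2⌋. Then f is a convex function of s; consequently, max over d ≤ s ≤ ⌊(n−1)/2⌋ of f(s) is attained at s = d or s = ⌊(n−1)/2⌋. -/
import Mathlib


/-- `f s = s·C(s-1, k-1) + C(n-s, k)`, the number of `k`-cliques of
`K_s ∨ (sK₁ ∪ K_{n-2s})`, as an integer. -/
def cliqueCount (n k s : ℕ) : ℤ :=
  (s : ℤ) * (s - 1).choose (k - 1) + (n - s).choose k

lemma cliqueCount_eq (n m s : ℕ) :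
    cliqueCount n (m + 2) s = (m + 2) * ((s.choose (m + 2) : ℤ)) + ((n - s).choose (m + 2) : ℤ) := by
  cases s with
  | zero => simp [cliqueCount]
  | succ r =>
    have h := Nat.add_one_mul_choose_eq r (m + 1)
    unfold cliqueCount
    have h1 : r + 1 - 1 = r := by omega
    have h2 : m + 2 - 1 = m + 1 := by omega
    rw [h1, h2]
    have : ((r + 1) * r.choose (m + 1) : ℤ) = ((r + 1).choose (m + 2) * (m + 2) : ℤ) := by
      exact_mod_cast congrArg (Nat.cast : ℕ → ℤ) h
    push_cast at this ⊢
    linarith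

lemma cliqueCount_diff (n m s : ℕ) (h : s + 1 ≤ n) :
    cliqueCount n (m + 2) (s + 1) - cliqueCount n (m + 2) s =
      (m + 2) * ((s.choose (m + 1) : ℤ)) - ((n - s - 1).choose (m + 1) : ℤ) := by
  rw [cliqueCount_eq, cliqueCount_eq]
  have h1 : (s + 1).choose (m + 2) = s.choose (m + 1) + s.choose (m + 2) :=
    Nat.choose_succ_succ s (m + 1)
  have h2 : n - s = (n - s - 1) + 1 := by omega
  have h3 : n - (s + 1) = n - s - 1 := by omega
  rw [h1, h3, h2]
  rw [Nat.choose_succ_succ (n - s - 1) (m + 1)]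
  push_cast
  ring

lemma tele_up (f : ℕ → ℤ) (a b : ℕ) (hab : a ≤ b)
    (h : ∀ t, a ≤ t → t < b → 0 ≤ f (t + 1) - f t) : f a ≤ f b := by
  induction b, hab using Nat.le_induction with
  | base => exact le_refl _
  | succ b hb ih =>
    have h1 := h b hb (by omega)
    have h2 := ih (fun t ht htb => h t ht (by omega))
    linarith

lemma tele_down (f : ℕ → ℤ) (a b : ℕ) (hab : a ≤ b)
    (h : ∀ t, a ≤ t → t < b → f (t + 1) - f t ≤ 0) : f b ≤ f a := by
  induction b, hab using Nat.le_induction with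
  | base => exact le_refl _
  | succ b hb ih =>
    have h1 := h b hb (by omega)
    have h2 := ih (fun t ht htb => h t ht (by omega))
    linarith

/-- For fixed `n` and `k ≥ 2`, the function `f(s) = s·C(s-1,k-1) + C(n-s,k)` is convex on
`1 ≤ s ≤ ⌊(n-1)/2⌋` (its successive differences are nondecreasing); consequently its
maximum over any interval `d ≤ s ≤ ⌊(n-1)/2⌋` is attained at an endpoint. -/
theorem cliqueCount_convex {n k : ℕ} (hk : 2 ≤ k) :
    (∀ s t : ℕ, 1 ≤ s → s ≤ t → t + 1 ≤ (n - 1) / 2 →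
      cliqueCount n k (s + 1) - cliqueCount n k s ≤
        cliqueCount n k (t + 1) - cliqueCount n k t) ∧
    (∀ d s : ℕ, 1 ≤ d → d ≤ s → s ≤ (n - 1) / 2 →
      cliqueCount n k s ≤ max (cliqueCount n k d) (cliqueCount n k ((n - 1) / 2))) := by
  obtain ⟨m, rfl⟩ : ∃ m, k = m + 2 := ⟨k - 2, by omega⟩
  have part1 : ∀ s t : ℕ, 1 ≤ s → s ≤ t → t + 1 ≤ (n - 1) / 2 →
      cliqueCount n (m + 2) (s + 1) - cliqueCount n (m + 2) s ≤
        cliqueCount n (m + 2) (t + 1) - cliqueCount n (m + 2) t := by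
    intro s t hs hst ht
    have hn : 2 * t + 3 ≤ n := by omega
    rw [cliqueCount_diff n m s (by omega), cliqueCount_diff n m t (by omega)]
    apply sub_le_sub
    · have : s.choose (m + 1) ≤ t.choose (m + 1) := Nat.choose_le_choose (m + 1) hst
      have : (s.choose (m + 1) : ℤ) ≤ (t.choose (m + 1) : ℤ) := by exact_mod_cast this
      nlinarith
    · have : (n - t - 1).choose (m + 1) ≤ (n - s - 1).choose (m + 1) :=
        Nat.choose_le_choose (m + 1) (by omega)
      exact_mod_cast this
  refine ⟨part1, ?_⟩
  intro d s hd hds hsM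
  rcases eq_or_lt_of_le hsM with heq | hlt
  · rw [heq]; exact le_max_right _ _
  · by_cases hg : 0 ≤ cliqueCount n (m + 2) (s + 1) - cliqueCount n (m + 2) s
    · refine le_trans ?_ (le_max_right _ _)
      apply tele_up _ s ((n - 1) / 2) (le_of_lt hlt)
      intro t ht htM
      exact le_trans hg (part1 s t (le_trans hd hds) ht (by omega))
    · refine le_trans ?_ (le_max_left _ _)
      apply tele_down _ d s hds
      intro t htd hts
      push_neg at hg
      have := part1 t s (le_trans hd htd) (le_of_lt hts) (by omega)
      linarith
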